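/- Let 0 < λ < 1 < μ. Then the point p* = (x*, y*) is a fixed point of Φ_{λ,μ}, and it lies in the interior of the triangle T, i.e., 0 < y* < x* < 1. -/

import Mathlib

noncomputable section

/-- The planar R-S flip-flop model map `Φ_{λ,μ}(x,y) = (1 − x(λ(1−x) + y), μy(x − y))`. -/
def Phi (l m : ℝ) (p : ℝ × ℝ) : ℝ × ℝ :=
  (1 - p.1 * (l * (1 - p.1) + p.2), m * p.2 * (p.1 - p.2))

/-- `x*` coordinate of the interior fixed point. -/
def xstar (l m : ℝ) : ℝ :=
  ((m⁻¹ - l - 1) + Real.sqrt ((1 + l - m⁻¹) ^ 2 + 4 * (1 - l))) / (2 * (1 - l))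

/-- `y*` coordinate of the interior fixed point. -/
def ystar (l m : ℝ) : ℝ := xstar l m - 1 / m

/-- For 0 < λ < 1 < μ, p* = (x*, y*) is a fixed point of Φ_{λ,μ} lying in the interior
of the triangle T, i.e. 0 < y* < x* < 1. -/
theorem stmt_12 (l m : ℝ) (hl0 : 0 < l) (hl1 : l < 1) (hm : 1 < m) :
    Phi l m (xstar l m, ystar l m) = (xstar l m, ystar l m) ∧
    0 < ystar l m ∧ ystar l m < xstar l m ∧ xstar l m < 1 := by
  have ha : (0:ℝ) < 1 - l := by linarith
  have hm0 : (0:ℝ) < m := by linarith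
  have ht0 : (0:ℝ) < m⁻¹ := by positivity
  have ht1 : m⁻¹ < 1 := by
    rw [inv_lt_one_iff₀]; right; exact hm
  set s := Real.sqrt ((1 + l - m⁻¹) ^ 2 + 4 * (1 - l)) with hs_def
  have harg : (0:ℝ) < (1 + l - m⁻¹) ^ 2 + 4 * (1 - l) := by positivity
  have hs2 : s ^ 2 = (1 + l - m⁻¹) ^ 2 + 4 * (1 - l) :=
    Real.sq_sqrt harg.le
  have hs0 : (0:ℝ) < s := Real.sqrt_pos.mpr harg
  set x := xstar l m with hx_def
  have hx : 2 * (1 - l) * x = (m⁻¹ - l - 1) + s := by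
    rw [hx_def, xstar, ← hs_def]
    field_simp
  have hquad4 : 4 * (1 - l) * ((1 - l) * x ^ 2 + (1 + l - m⁻¹) * x - 1) = 0 := by
    linear_combination hs2 + (2 * (1 - l) * x + (1 + l - m⁻¹) + s) * hx
  have hquad : (1 - l) * x ^ 2 + (1 + l - m⁻¹) * x - 1 = 0 := by
    have h4 : (4 : ℝ) * (1 - l) ≠ 0 := by positivity
    exact (mul_eq_zero.mp hquad4).resolve_left h4
  have hx1 : x < 1 := by
    have hkey : s < 3 - l - m⁻¹ := by
      nlinarith [hs2, hs0]
    rw [hx_def, xstar, ← hs_def, div_lt_one (by linarith)]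
    linarith
  have hxt : m⁻¹ < x := by
    have hkey : 2 * (1 - l) * m⁻¹ + (1 + l - m⁻¹) < s := by
      nlinarith [hs2, hs0, mul_pos (mul_pos ha (sub_pos.mpr ht1))
        (sub_pos.mpr (show l * m⁻¹ < 1 by nlinarith))]
    nlinarith [hx, hkey, ha]
  have hy0 : 0 < ystar l m := by
    rw [ystar, ← hx_def, one_div]; linarith
  have hyx : ystar l m < x := by
    rw [ystar, ← hx_def]
    have : (0:ℝ) < 1 / m := by positivity
    linarith
  refine ⟨?_, hy0, hyx, hx1⟩
  have hyeq : ystar l m = x - m⁻¹ := by rw [ystar, ← hx_def, one_div]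
  have hm' : m ≠ 0 := ne_of_gt hm0
  ext <;> simp only [Phi, hyeq]
  · linear_combination -hquad
  · field_simp
    ring
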